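/- arXiv:2209.15416 — 2 statements merged into one kernel-verified Lean document; each statement's English description precedes it below -/
import Mathlib

section
/- Let α be a probability measure on ℝⁿ and g ∈ ℝⁿ such that the 'tie sets' {x : x_i + g_i = x_j + g_j} have α-measure zero for all i ≠ j, and suppose α(L_i(g)) = p*_i for each i, where L_i(g) = {x : x_i + g_i ≥ x_k + g_k ∀k}. Then for any measurable allocation policy π (π(y_i|x) ≥ 0, Σ_i π(y_i|x) = 1) satisfying ∫ π(y_i|x) dα(x) = p*_i for all i, we have Σ_i ∫_{L_i(g)} x_i dα(x) ≥ Σ_i ∫ x_i π(y_i|x) dα(x). That is, the Laguerre-cell (shifted-greedy) policy maximizes expected welfare among all policies meeting the matching-distribution constraints. -/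
open MeasureTheory Finset

/-- the shifted-greedy (Laguerre-cell) policy maximizes expected welfare
among all allocation policies satisfying the matching-distribution constraints. -/
theorem stmt5 (n : ℕ) (hn : 0 < n)
    (α : Measure (Fin n → ℝ)) [IsProbabilityMeasure α]
    (xbar : ℝ) (hsupp : α {x | ∃ i, x i ∉ Set.Icc (0:ℝ) xbar} = 0)
    (hint : ∀ i : Fin n, Integrable (fun x : Fin n → ℝ => x i) α)
    (g : Fin n → ℝ)
    (hties : ∀ i j : Fin n, i ≠ j → α {x | x i + g i = x j + g j} = 0)
    (L : Fin n → Set (Fin n → ℝ))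
    (hL : ∀ i, L i = {x | ∀ k, x k + g k ≤ x i + g i})
    (p : Fin n → ℝ) (hp : ∀ i, 0 < p i) (hpsum : ∑ i, p i = 1)
    (hLp : ∀ i, (α (L i)).toReal = p i)
    (π : (Fin n → ℝ) → Fin n → ℝ)
    (hπmeas : ∀ i, Measurable (fun x => π x i))
    (hπnn : ∀ x i, 0 ≤ π x i)
    (hπsum : ∀ x, ∑ i, π x i = 1)
    (hπp : ∀ i, ∫ x, π x i ∂α = p i) :
    ∑ i, ∫ x in L i, x i ∂α ≥ ∑ i, ∫ x, x i * π x i ∂α := by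
  haveI : Nonempty (Fin n) := Fin.pos_iff_nonempty.mp hn
  have hne : (univ : Finset (Fin n)).Nonempty := univ_nonempty
  set M : (Fin n → ℝ) → ℝ := univ.sup' hne (fun i x => x i + g i) with hMdef
  have hMapp : ∀ x, M x = univ.sup' hne (fun i => x i + g i) := by
    intro x; exact Finset.sup'_apply hne (fun i x => x i + g i) x
  have hMle : ∀ x i, x i + g i ≤ M x := by
    intro x i; rw [hMapp]; exact le_sup' (fun k => x k + g k) (mem_univ i)
  have hMeq : ∀ x, ∃ i, M x = x i + g i := by
    intro x
    obtain ⟨i, _, hi⟩ := exists_mem_eq_sup' hne (fun i => x i + g i)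
    exact ⟨i, by rw [hMapp, hi]⟩
  -- measurability
  have hMmeas : Measurable M :=
    Finset.measurable_sup' hne (fun i _ => by fun_prop)
  have hLmeas : ∀ i, MeasurableSet (L i) := by
    intro i
    have h1 : L i = ⋂ k, {x : Fin n → ℝ | x k + g k ≤ x i + g i} := by
      rw [hL i]; ext x; simp [Set.mem_iInter]
    rw [h1]
    exact MeasurableSet.iInter fun k =>
      measurableSet_le (by fun_prop) (by fun_prop)
  -- integrability of M
  have hbint : Integrable (fun x : Fin n → ℝ => ∑ i, |x i + g i|) α :=
    integrable_finset_sum _ fun i _ => ((hint i).add (integrable_const (g i))).abs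
  have hMint : Integrable M α := by
    refine hbint.mono' hMmeas.aestronglyMeasurable (ae_of_all _ fun x => ?_)
    obtain ⟨i, hi⟩ := hMeq x
    calc ‖M x‖ = |x i + g i| := by rw [hi]; rfl
      _ ≤ ∑ j, |x j + g j| :=
        Finset.single_le_sum (f := fun j => |x j + g j|) (fun j _ => abs_nonneg _) (mem_univ i)
  -- the cells cover everything and are a.e. disjoint
  have hUnion : (⋃ i, L i) = Set.univ := by
    refine Set.eq_univ_iff_forall.mpr fun x => ?_
    obtain ⟨i, _, hi⟩ := Finset.exists_max_image univ (fun i => x i + g i) hne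
    exact Set.mem_iUnion.mpr ⟨i, by rw [hL]; exact fun k => hi k (mem_univ k)⟩
  have hdisj : Pairwise (Function.onFun (AEDisjoint α) L) := by
    intro i j hij
    refine measure_mono_null (fun x hx => ?_) (hties i j hij)
    obtain ⟨hxi, hxj⟩ := hx
    rw [hL i] at hxi; rw [hL j] at hxj
    exact le_antisymm (hxj i) (hxi j)
  have key1 : ∫ x, M x ∂α = ∑ i, ∫ x in L i, M x ∂α := by
    have h := integral_iUnion_ae (μ := α) (f := M)
      (fun i => (hLmeas i).nullMeasurableSet) hdisj
      (hMint.integrableOn)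
    rw [hUnion] at h
    simpa [tsum_fintype] using h
  -- value of the greedy policy
  have cell_eq : ∀ i, ∫ x in L i, x i ∂α = (∫ x in L i, M x ∂α) - g i * p i := by
    intro i
    have hMeqL : ∀ x ∈ L i, M x = x i + g i := by
      intro x hx
      rw [hL i] at hx
      refine le_antisymm ?_ (hMle x i)
      rw [hMapp]; exact Finset.sup'_le _ _ fun k _ => hx k
    have h1 : ∫ x in L i, M x ∂α = ∫ x in L i, (x i + g i) ∂α :=
      setIntegral_congr_fun (hLmeas i) hMeqL
    have h2 : ∫ x in L i, (x i + g i) ∂α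
        = (∫ x in L i, x i ∂α) + (∫ x in L i, (g i : ℝ) ∂α) :=
      integral_add ((hint i).integrableOn) ((integrable_const (g i)).integrableOn)
    have h3 : ∫ x in L i, (g i : ℝ) ∂α = p i * g i := by
      rw [setIntegral_const, measureReal_def, hLp i, smul_eq_mul]
    rw [h1, h2, h3]; ring
  have greedy : ∑ i, ∫ x in L i, x i ∂α = (∫ x, M x ∂α) - ∑ i, g i * p i := by
    rw [key1, ← Finset.sum_sub_distrib]
    exact Finset.sum_congr rfl fun i _ => cell_eq i
  -- bounds on π
  have hπle1 : ∀ x i, π x i ≤ 1 := by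
    intro x i
    calc π x i ≤ ∑ j, π x j := Finset.single_le_sum (fun j _ => hπnn x j) (mem_univ i)
      _ = 1 := hπsum x
  have int_pi : ∀ i, Integrable (fun x => π x i) α := by
    intro i
    refine (integrable_const (1 : ℝ)).mono' (hπmeas i).aestronglyMeasurable
      (ae_of_all _ fun x => ?_)
    rw [Real.norm_eq_abs, abs_of_nonneg (hπnn x i)]
    exact hπle1 x i
  have int_mul : ∀ i, Integrable (fun x : Fin n → ℝ => x i * π x i) α := by
    intro i
    refine (hint i).abs.mono'
      (((measurable_pi_apply i).mul (hπmeas i)).aestronglyMeasurable)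
      (ae_of_all _ fun x => ?_)
    rw [Real.norm_eq_abs, abs_mul, abs_of_nonneg (hπnn x i)]
    calc |x i| * π x i ≤ |x i| * 1 :=
          mul_le_mul_of_nonneg_left (hπle1 x i) (abs_nonneg _)
      _ = |x i| := mul_one _
  have int_add_mul : ∀ i, Integrable (fun x : Fin n → ℝ => (x i + g i) * π x i) α := by
    intro i
    have : (fun x : Fin n → ℝ => (x i + g i) * π x i)
        = fun x => x i * π x i + g i * π x i := by ext x; ring
    rw [this]
    exact (int_mul i).add ((int_pi i).const_mul (g i))
  have eq2 : ∀ i, ∫ x, x i * π x i ∂α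
      = (∫ x, (x i + g i) * π x i ∂α) - g i * p i := by
    intro i
    have h1 : (fun x : Fin n → ℝ => (x i + g i) * π x i)
        = fun x => x i * π x i + g i * π x i := by ext x; ring
    rw [h1, integral_add (int_mul i) ((int_pi i).const_mul (g i)),
      integral_const_mul, hπp i]
    ring
  have sum_le : ∑ i, ∫ x, (x i + g i) * π x i ∂α ≤ ∫ x, M x ∂α := by
    rw [← integral_finset_sum _ (fun i _ => int_add_mul i)]
    refine integral_mono (integrable_finset_sum _ fun i _ => int_add_mul i) hMint fun x => ?_
    calc ∑ i, (x i + g i) * π x i ≤ ∑ i, M x * π x i :=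
          Finset.sum_le_sum fun i _ => mul_le_mul_of_nonneg_right (hMle x i) (hπnn x i)
      _ = M x := by rw [← Finset.mul_sum, hπsum, mul_one]
  calc ∑ i, ∫ x, x i * π x i ∂α
      = (∑ i, ∫ x, (x i + g i) * π x i ∂α) - ∑ i, g i * p i := by
        rw [← Finset.sum_sub_distrib]
        exact Finset.sum_congr rfl fun i _ => eq2 i
    _ ≤ (∫ x, M x ∂α) - ∑ i, g i * p i := by linarith [sum_le]
    _ = ∑ i, ∫ x in L i, x i ∂α := greedy.symm
end

section
/- For n = 2, let α be a probability measure on [0,1]² assigning zero mass to every line {x : x_2 = x_1 + t}. Fix t with α(Ω_B) = p* where Ω_B = {x ∈ [0,1]² : x_2 ≥ x_1 + t} and Ω_A = its complement. Then for any measurable map π: [0,1]² → {A,B} with α(π⁻¹(B)) = p*, we have ∫_{Ω_A} x_1 dα + ∫_{Ω_B} x_2 dα ≥ ∫_{π⁻¹(A)} x_1 dα + ∫_{π⁻¹(B)} x_2 dα. -/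
open MeasureTheory

/-- for two recipients, the slope-1 diagonal partition with the
prescribed mass above the line maximizes the matched weight among all measurable
partitions with the same matching distribution. (`true` encodes recipient `B`.) -/
theorem stmt7 (α : Measure (ℝ × ℝ)) [IsProbabilityMeasure α]
    (hsupp : α (Set.Icc ((0:ℝ), (0:ℝ)) (1, 1))ᶜ = 0)
    (hlines : ∀ t : ℝ, α {x : ℝ × ℝ | x.2 = x.1 + t} = 0)
    (t : ℝ) (p : ℝ)
    (ΩB : Set (ℝ × ℝ)) (hΩB : ΩB = {x : ℝ × ℝ | x.2 ≥ x.1 + t})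
    (hΩBp : (α ΩB).toReal = p)
    (π : ℝ × ℝ → Bool) (hπ : Measurable π)
    (hπp : (α (π ⁻¹' {true})).toReal = p) :
    (∫ x in ΩBᶜ, x.1 ∂α) + (∫ x in ΩB, x.2 ∂α)
      ≥ (∫ x in π ⁻¹' {false}, x.1 ∂α) + (∫ x in π ⁻¹' {true}, x.2 ∂α) := by
  subst hΩB
  set S : Set (ℝ × ℝ) := {x : ℝ × ℝ | x.2 ≥ x.1 + t} with hSdef
  set T : Set (ℝ × ℝ) := π ⁻¹' {true} with hT
  have hSm : MeasurableSet S := measurableSet_le (by measurability) measurable_snd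
  have hTm : MeasurableSet T := hπ (measurableSet_singleton true)
  have hTc : π ⁻¹' {false} = Tᶜ := by
    ext x; simp [hT]
  -- a.e. bound
  have hbound : ∀ᵐ x ∂α, x ∈ Set.Icc ((0:ℝ), (0:ℝ)) (1, 1) := by
    exact ae_iff.mpr hsupp
  have h1 : Integrable (fun x : ℝ × ℝ => x.1) α := by
    apply Integrable.mono' (integrable_const (1:ℝ)) measurable_fst.aestronglyMeasurable
    filter_upwards [hbound] with x hx
    simp only [Set.mem_Icc, Prod.le_def] at hx
    rw [Real.norm_eq_abs, abs_le]
    exact ⟨by linarith [hx.1.1], hx.2.1⟩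
  have h2 : Integrable (fun x : ℝ × ℝ => x.2) α := by
    apply Integrable.mono' (integrable_const (1:ℝ)) measurable_snd.aestronglyMeasurable
    filter_upwards [hbound] with x hx
    simp only [Set.mem_Icc, Prod.le_def] at hx
    rw [Real.norm_eq_abs, abs_le]
    exact ⟨by linarith [hx.1.2], hx.2.2⟩
  set f : ℝ × ℝ → ℝ := fun x => x.2 - x.1 with hf
  have hfi : Integrable f α := h2.sub h1
  -- reduce each side
  have key : ∀ U : Set (ℝ × ℝ), MeasurableSet U →
      (∫ x in Uᶜ, x.1 ∂α) + (∫ x in U, x.2 ∂α)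
        = (∫ x, x.1 ∂α) + ∫ x in U, f x ∂α := by
    intro U hU
    have e1 : (∫ x in U, x.2 ∂α) = (∫ x in U, x.1 ∂α) + ∫ x in U, f x ∂α := by
      rw [← integral_add h1.integrableOn hfi.integrableOn]
      apply integral_congr_ae
      filter_upwards with x
      simp [hf]
    rw [e1, ← add_assoc]
    congr 1
    rw [add_comm]
    exact integral_add_compl hU h1
  rw [hTc, key S hSm, key T hTm]
  -- measure equalities
  have hmeq : α S = α T := by
    rw [← ENNReal.toReal_eq_toReal_iff' (measure_ne_top α S) (measure_ne_top α T)]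
    rw [hΩBp, hπp]
  have hdiffeq : α (S \ T) = α (T \ S) := by
    have a1 : α (S \ T) + α (S ∩ T) = α S := measure_diff_add_inter S hTm
    have a2 : α (T \ S) + α (T ∩ S) = α T := measure_diff_add_inter T hSm
    rw [Set.inter_comm] at a2
    have : α (S \ T) + α (S ∩ T) = α (T \ S) + α (S ∩ T) := by
      rw [a1, a2, hmeq]
    exact WithTop.add_right_cancel (measure_ne_top α _) this
  -- splits
  have hdisj : ∀ U V : Set (ℝ × ℝ), Disjoint (U \ V) (U ∩ V) :=
    fun U V => Set.disjoint_sdiff_left.mono_right Set.inter_subset_right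
  have hsplit : ∀ U V : Set (ℝ × ℝ), MeasurableSet U → MeasurableSet V →
      (∫ x in U, f x ∂α) = (∫ x in U \ V, f x ∂α) + ∫ x in U ∩ V, f x ∂α := by
    intro U V hU hV
    rw [← setIntegral_union (hdisj U V) (hU.inter hV)
      hfi.integrableOn hfi.integrableOn, Set.diff_union_inter]
  have hS' := hsplit S T hSm hTm
  have hT' := hsplit T S hTm hSm
  rw [Set.inter_comm T S] at hT'
  -- pointwise bounds
  have hge : t * (α (S \ T)).toReal ≤ ∫ x in S \ T, f x ∂α := by
    apply setIntegral_ge_of_const_le_real (hSm.diff hTm) (measure_ne_top α _)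
    · intro x hx
      have hxS : x ∈ S := hx.1
      simp only [hSdef, Set.mem_setOf_eq, ge_iff_le] at hxS
      show t ≤ x.2 - x.1
      linarith
    · exact hfi.integrableOn
  have hle : ∫ x in T \ S, f x ∂α ≤ t * (α (T \ S)).toReal := by
    calc ∫ x in T \ S, f x ∂α ≤ ∫ x in T \ S, t ∂α := by
          apply setIntegral_mono_on hfi.integrableOn (integrable_const t).integrableOn
            (hTm.diff hSm)
          intro x hx
          have hxS : x ∉ S := hx.2
          simp only [hSdef, Set.mem_setOf_eq, ge_iff_le, not_le] at hxS
          show x.2 - x.1 ≤ t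
          linarith
      _ = t * (α (T \ S)).toReal := by rw [setIntegral_const, smul_eq_mul]; exact mul_comm _ _
  have hmr : (α (S \ T)).toReal = (α (T \ S)).toReal := by rw [hdiffeq]
  have : ∫ x in T, f x ∂α ≤ ∫ x in S, f x ∂α := by
    rw [hS', hT']
    rw [hmr] at hge
    linarith
  linarith
end
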